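/- For every a ∈ (0,1), the function Ψ_a has exactly one zero in the open interval (0, j₁,₁), where j₁,₁ denotes the smallest positive zero of J₁; consequently, every positive zero of Ψ_a other than its smallest one is greater than j₁,₁. -/

import Mathlib

set_option maxHeartbeats 1000000

open Real

noncomputable section

/-- Bessel function of the first kind of order 0, via its power series. -/
def J0 (x : ℝ) : ℝ := ∑' k : ℕ, (-1 : ℝ) ^ k * (x / 2) ^ (2 * k) / ((k.factorial : ℝ)) ^ 2

/-- Bessel function of the first kind of order 1, via its power series. -/
def J1 (x : ℝ) : ℝ :=
  ∑' k : ℕ, (-1 : ℝ) ^ k * (x / 2) ^ (2 * k + 1) / ((k.factorial : ℝ) * ((k + 1).factorial : ℝ))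

/-- The transcendental function `Ψ_a(x) = J₀(x) + 2 log(a) x J₁(x)`. -/
def Psi (a x : ℝ) : ℝ := J0 x + 2 * Real.log a * x * J1 x

/-- term of J0 -/
def f0 (k : ℕ) (x : ℝ) : ℝ := (-1 : ℝ) ^ k * (x / 2) ^ (2 * k) / ((k.factorial : ℝ)) ^ 2

/-- term of J1 -/
def f1 (k : ℕ) (x : ℝ) : ℝ :=
  (-1 : ℝ) ^ k * (x / 2) ^ (2 * k + 1) / ((k.factorial : ℝ) * ((k + 1).factorial : ℝ))

lemma J0_eq (x : ℝ) : J0 x = ∑' k, f0 k x := rfl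
lemma J1_eq (x : ℝ) : J1 x = ∑' k, f1 k x := rfl

lemma fact_pos (k : ℕ) : (0:ℝ) < (k.factorial : ℝ) := by
  exact_mod_cast k.factorial_pos

lemma fact_ge_one (k : ℕ) : (1:ℝ) ≤ (k.factorial : ℝ) := by
  exact_mod_cast k.factorial_pos

lemma abs_f0 (k : ℕ) (x : ℝ) : |f0 k x| = (x/2)^(2*k) / ((k.factorial : ℝ))^2 := by
  rw [f0, abs_div, abs_mul, abs_pow, abs_pow, abs_neg, abs_one, one_pow, one_mul,
    pow_mul, abs_pow, sq_abs, ← pow_mul]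
  rw [abs_of_pos (by positivity)]

lemma abs_f1 (k : ℕ) (x : ℝ) :
    |f1 k x| = |x/2|^(2*k+1) / ((k.factorial : ℝ) * ((k+1).factorial : ℝ)) := by
  rw [f1, abs_div, abs_mul, abs_pow, abs_pow, abs_neg, abs_one, one_pow, one_mul]
  congr 1
  rw [abs_mul, abs_of_pos (fact_pos k), abs_of_pos (fact_pos (k+1))]

lemma summable_f0 (x : ℝ) : Summable fun k => f0 k x := by
  apply Summable.of_abs
  refine Summable.of_nonneg_of_le (fun k => abs_nonneg _) (fun k => ?_)
    (Real.summable_pow_div_factorial (x^2/4))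
  · rw [abs_f0, pow_mul]
    have : (x/2)^2 = x^2/4 := by ring
    rw [this]
    apply div_le_div_of_nonneg_left ?_ (fact_pos k) ?_
    · positivity
    · calc (k.factorial : ℝ) = k.factorial * 1 := by ring
        _ ≤ (k.factorial : ℝ) * k.factorial := by
            apply mul_le_mul_of_nonneg_left (fact_ge_one k) (fact_pos k).le
        _ = (k.factorial : ℝ)^2 := (sq _).symm

lemma summable_f1 (x : ℝ) : Summable fun k => f1 k x := by
  apply Summable.of_abs
  refine Summable.of_nonneg_of_le (fun k => abs_nonneg _) (fun k => ?_)
    ((Real.summable_pow_div_factorial (x^2/4)).mul_left (|x/2|))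
  · rw [abs_f1, pow_succ, mul_comm (|x/2| ^ (2*k)) (|x/2|), mul_div_assoc]
    apply mul_le_mul_of_nonneg_left ?_ (abs_nonneg _)
    rw [pow_mul, sq_abs]
    have : (x/2)^2 = x^2/4 := by ring
    rw [this]
    apply div_le_div_of_nonneg_left ?_ (fact_pos k) ?_
    · positivity
    · calc (k.factorial : ℝ) = k.factorial * 1 := by ring
        _ ≤ (k.factorial : ℝ) * (k+1).factorial := by
            apply mul_le_mul_of_nonneg_left (fact_ge_one _) (fact_pos k).le

/-- generic tail bound -/
lemma tail_bound {f : ℕ → ℝ} (hf : Summable f) (N : ℕ) {a r : ℝ} (hr0 : 0 ≤ r) (hr1 : r < 1)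
    (h : ∀ j : ℕ, |f (j + N)| ≤ a * r ^ j) :
    |∑' k, f k - ∑ k ∈ Finset.range N, f k| ≤ a / (1 - r) := by
  have key := Summable.sum_add_tsum_nat_add N hf
  have hsum : Summable fun j => f (j + N) := (summable_nat_add_iff N).2 hf
  have habs : Summable fun j => |f (j + N)| := hsum.abs
  have hgeo : Summable fun j : ℕ => a * r ^ j :=
    (summable_geometric_of_lt_one hr0 hr1).mul_left a
  have h1 : ∑' k, f k - ∑ k ∈ Finset.range N, f k = ∑' j, f (j + N) := by
    rw [← key]; ring
  rw [h1]
  calc |∑' j, f (j + N)| ≤ ∑' j, |f (j + N)| := by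
        have := norm_tsum_le_tsum_norm (f := fun j => f (j + N)) (by simpa [Real.norm_eq_abs] using habs)
        simpa [Real.norm_eq_abs] using this
    _ ≤ ∑' j : ℕ, a * r ^ j := Summable.tsum_le_tsum h habs hgeo
    _ = a * (1 - r)⁻¹ := by rw [tsum_mul_left, tsum_geometric_of_lt_one hr0 hr1]
    _ = a / (1 - r) := by rw [div_eq_mul_inv]


/-- derivative of the k-th term of J0 -/
def d0 (k : ℕ) (x : ℝ) : ℝ := match k with
  | 0 => 0
  | (j+1) => -(f1 j x)

lemma hasDerivAt_f0 (k : ℕ) (x : ℝ) : HasDerivAt (fun y => f0 k y) (d0 k x) x := by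
  match k with
  | 0 =>
    have : (fun y : ℝ => f0 0 y) = fun _ => (1:ℝ) := by
      funext y; simp [f0]
    rw [this]
    simpa [d0] using hasDerivAt_const x (1:ℝ)
  | (j+1) =>
    have h1 : HasDerivAt (fun y : ℝ => (y/2)^(2*(j+1)))
        ((2*(j+1)) * (x/2)^(2*(j+1)-1) * (1/2)) x := by
      have hid : HasDerivAt (fun y : ℝ => y/2) (1/2) x := (hasDerivAt_id x).div_const 2
      simpa using hid.fun_pow (2*(j+1))
    have h2 := h1.const_mul ((-1:ℝ)^(j+1) / ((j+1).factorial : ℝ)^2)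
    have heq : (fun y : ℝ => (-1:ℝ)^(j+1) / ((j+1).factorial : ℝ)^2 * (y/2)^(2*(j+1)))
        = fun y => f0 (j+1) y := by
      funext y; rw [f0]; ring
    rw [heq] at h2
    refine h2.congr_deriv ?_
    rw [d0, f1]
    have hfs : (((j+1).factorial : ℝ)) = (j+1) * (j.factorial : ℝ) := by
      exact_mod_cast (Nat.factorial_succ j)
    have h2j : 2*(j+1)-1 = 2*j+1 := by omega
    rw [h2j, hfs]
    have hj0 : (j.factorial : ℝ) ≠ 0 := (fact_pos j).ne'
    have hj1 : (j:ℝ) + 1 ≠ 0 := by positivity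
    field_simp
    ring

lemma hasDerivAt_f1 (k : ℕ) (x : ℝ) :
    HasDerivAt (fun y => f1 k y)
      ((-1:ℝ)^k * ((2*k+1) * (x/2)^(2*k) * (1/2)) / ((k.factorial : ℝ) * ((k+1).factorial : ℝ))) x := by
  have h1 : HasDerivAt (fun y : ℝ => (y/2)^(2*k+1))
      ((2*k+1) * (x/2)^(2*k+1-1) * (1/2)) x := by
    have hid : HasDerivAt (fun y : ℝ => y/2) (1/2) x := (hasDerivAt_id x).div_const 2
    simpa using hid.fun_pow (2*k+1)
  have h2 := h1.const_mul ((-1:ℝ)^k / ((k.factorial : ℝ) * ((k+1).factorial : ℝ)))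
  have heq : (fun y : ℝ => (-1:ℝ)^k / ((k.factorial : ℝ) * ((k+1).factorial : ℝ)) * (y/2)^(2*k+1))
      = fun y => f1 k y := by
    funext y; rw [f1]; ring
  rw [heq] at h2
  refine h2.congr_deriv ?_
  have h2k : 2*k+1-1 = 2*k := rfl
  rw [h2k]
  push_cast
  ring

/-- the k-th term of x * J1 x -/
def h1t (k : ℕ) (x : ℝ) : ℝ := x * f1 k x

lemma hasDerivAt_h1t (k : ℕ) (x : ℝ) : HasDerivAt (fun y => h1t k y) (x * f0 k x) x := by
  have this1 := (hasDerivAt_id x).fun_mul (hasDerivAt_f1 k x)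
  have heq : (fun y : ℝ => id y * f1 k y) = fun y => h1t k y := rfl
  rw [heq] at this1
  refine this1.congr_deriv ?_
  rw [id]
  rw [f0, f1]
  have hfs : (((k+1).factorial : ℝ)) = (k+1) * (k.factorial : ℝ) := by
    exact_mod_cast (Nat.factorial_succ k)
  rw [hfs]
  have hj0 : (k.factorial : ℝ) ≠ 0 := (fact_pos k).ne'
  have hj1 : (k:ℝ) + 1 ≠ 0 := by positivity
  have hpow : (x/2)^(2*k+1) = (x/2)^(2*k) * (x/2) := by rw [pow_succ]
  rw [hpow]
  field_simp
  ring

/-- x * J1 x -/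
def FJ (x : ℝ) : ℝ := x * J1 x

lemma FJ_eq (x : ℝ) : FJ x = ∑' k, h1t k x := by
  rw [FJ, J1_eq, ← tsum_mul_left]
  rfl

lemma summable_d0 (y : ℝ) : Summable fun k => d0 k y := by
  have : Summable fun n => d0 (n + 1) y := by
    simpa [d0] using (summable_f1 y).neg
  exact (summable_nat_add_iff 1).1 this

lemma tsum_d0 (y : ℝ) : ∑' k, d0 k y = -(J1 y) := by
  rw [Summable.tsum_eq_zero_add (summable_d0 y)]
  have h0 : d0 0 y = 0 := rfl
  have h1 : (fun b : ℕ => d0 (b + 1) y) = fun b => -(f1 b y) := rfl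
  rw [h0, h1, tsum_neg, J1_eq]
  ring

lemma bound_d0 {k : ℕ} {y : ℝ} (hy : y ∈ Set.Ioo (-6:ℝ) 6) :
    ‖d0 k y‖ ≤ 3 * 9^k / (k.factorial : ℝ) := by
  have hy3 : |y/2| ≤ 3 := by
    rw [abs_le]; constructor <;> [nlinarith [hy.1]; nlinarith [hy.2]]
  match k with
  | 0 =>
    have h0 : ‖d0 0 y‖ = 0 := by simp [d0]
    rw [h0]; positivity
  | (j+1) =>
    have : ‖d0 (j+1) y‖ = |f1 j y| := by rw [d0]; exact abs_neg _
    rw [this, abs_f1]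
    have hnum : |y/2|^(2*j+1) ≤ 3^(2*j+1) := pow_le_pow_left₀ (abs_nonneg _) hy3 _
    have h3 : (3:ℝ)^(2*j+1) = 3 * 9^j := by
      rw [pow_succ, pow_mul]; norm_num; ring
    calc |y/2|^(2*j+1) / ((j.factorial : ℝ) * ((j+1).factorial : ℝ))
        ≤ 3^(2*j+1) / ((j.factorial : ℝ) * ((j+1).factorial : ℝ)) := by
          apply div_le_div_of_nonneg_right hnum ?_ |>.trans_eq rfl
          positivity
      _ ≤ 3 * 9^(j+1) / ((j+1).factorial : ℝ) := by
          rw [h3, div_le_div_iff₀ (by positivity) (fact_pos _)]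
          have h1 : (1:ℝ) ≤ (j.factorial : ℝ) := fact_ge_one j
          have h2 : (0:ℝ) < ((j+1).factorial : ℝ) := fact_pos _
          have h9 : (0:ℝ) < 9^j := by positivity
          calc 3 * 9^j * ((j+1).factorial : ℝ) = (3 * 9^j * ((j+1).factorial : ℝ)) * 1 := by ring
            _ ≤ (3 * 9^j * ((j+1).factorial : ℝ)) * (9 * (j.factorial : ℝ)) := by
                apply mul_le_mul_of_nonneg_left ?_ (by positivity)
                nlinarith
            _ = 3 * 9^(j+1) * ((j.factorial : ℝ) * ((j+1).factorial : ℝ)) := by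
                rw [pow_succ]; ring

lemma bound_h1t' {k : ℕ} {y : ℝ} (hy : y ∈ Set.Ioo (-6:ℝ) 6) :
    ‖y * f0 k y‖ ≤ 6 * 9^k / (k.factorial : ℝ) := by
  have hy6 : |y| ≤ 6 := by
    rw [abs_le]; exact ⟨hy.1.le, hy.2.le⟩
  have hy3 : |y/2| ≤ 3 := by
    rw [abs_le]; constructor <;> [nlinarith [hy.1]; nlinarith [hy.2]]
  rw [norm_mul, Real.norm_eq_abs, Real.norm_eq_abs, abs_f0]
  have habs : |(y/2)^(2*k)| = |y/2|^(2*k) := abs_pow _ _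
  have hnn : (0:ℝ) ≤ (y/2)^(2*k) := by
    rw [pow_mul]; positivity
  have h1 : (y/2)^(2*k) ≤ 9^k := by
    calc (y/2)^(2*k) = |y/2|^(2*k) := by rw [← habs, abs_of_nonneg hnn]
      _ ≤ 3^(2*k) := pow_le_pow_left₀ (abs_nonneg _) hy3 _
      _ = 9^k := by rw [pow_mul]; norm_num
  have h2 : ((k.factorial : ℝ)) ≤ (k.factorial : ℝ)^2 := by
    nlinarith [fact_ge_one k, fact_pos k]
  calc |y| * ((y/2)^(2*k) / ((k.factorial : ℝ))^2)
      ≤ 6 * (9^k / (k.factorial : ℝ)) := by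
        apply mul_le_mul hy6 ?_ (by positivity) (by norm_num)
        apply div_le_div₀ (by positivity) h1 (fact_pos k) h2
    _ = 6 * 9^k / (k.factorial : ℝ) := by ring

lemma hasDerivAt_J0 {y : ℝ} (hy : y ∈ Set.Ioo (-6:ℝ) 6) : HasDerivAt J0 (-(J1 y)) y := by
  have key := hasDerivAt_tsum_of_isPreconnected
    (u := fun k => 3 * 9^k / (k.factorial : ℝ))
    (((Real.summable_pow_div_factorial 9).mul_left 3).congr (by intro k; ring))
    isOpen_Ioo (convex_Ioo (-6:ℝ) 6).isPreconnected
    (fun k z _ => hasDerivAt_f0 k z)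
    (fun k z hz => bound_d0 hz)
    (Set.mem_Ioo.2 ⟨by norm_num, by norm_num⟩ : (0:ℝ) ∈ Set.Ioo (-6:ℝ) 6)
    (summable_f0 0) hy
  rw [tsum_d0] at key
  have : (fun z => ∑' k, f0 k z) = J0 := by funext z; rw [J0_eq]
  rwa [this] at key

lemma hasDerivAt_FJ {y : ℝ} (hy : y ∈ Set.Ioo (-6:ℝ) 6) : HasDerivAt FJ (y * J0 y) y := by
  have key := hasDerivAt_tsum_of_isPreconnected
    (u := fun k => 6 * 9^k / (k.factorial : ℝ))
    (((Real.summable_pow_div_factorial 9).mul_left 6).congr (by intro k; ring))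
    isOpen_Ioo (convex_Ioo (-6:ℝ) 6).isPreconnected
    (fun k z _ => hasDerivAt_h1t k z)
    (fun k z hz => bound_h1t' hz)
    (Set.mem_Ioo.2 ⟨by norm_num, by norm_num⟩ : (0:ℝ) ∈ Set.Ioo (-6:ℝ) 6)
    (by simpa [h1t] using ((summable_f1 0).mul_left 0)) hy
  have h1 : ∑' k, y * f0 k y = y * J0 y := by rw [J0_eq, tsum_mul_left]
  rw [h1] at key
  have : (fun z => ∑' k, h1t k z) = FJ := by funext z; rw [FJ_eq]
  rwa [this] at key

lemma fact_lb (n j : ℕ) : ((n.factorial : ℝ)) * ((n:ℝ)+1)^j ≤ ((j + n).factorial : ℝ) := by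
  have := Nat.factorial_mul_pow_le_factorial (m := n) (n := j)
  have h : (n + j).factorial = (j + n).factorial := by rw [Nat.add_comm]
  rw [h] at this
  exact_mod_cast this


lemma J1_lb {x : ℝ} (hx0 : 0 ≤ x) (hx : x ≤ 3) :
    (x/2) - (x/2)^3/2 + (x/2)^5/12 - (x/2)^7/144 - (x/2)^9/2664 ≤ J1 x := by
  set t := x/2 with ht
  have ht0 : 0 ≤ t := by positivity
  have ht32 : t ≤ 3/2 := by rw [ht]; linarith
  have htail : ∀ j : ℕ, |f1 (j + 4) x| ≤ (t^9/2880) * (3/40)^j := by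
    intro j
    rw [abs_f1]
    have habs : |x/2| = t := by rw [ht, abs_of_nonneg ht0]
    rw [habs]
    have hnum : t^(2*(j+4)+1) ≤ t^9 * (9/4)^j := by
      have : 2*(j+4)+1 = 9 + 2*j := by omega
      rw [this, pow_add, pow_mul]
      apply mul_le_mul_of_nonneg_left ?_ (by positivity)
      apply pow_le_pow_left₀ (by positivity) (by nlinarith) j
    have hden : (2880:ℝ) * 30^j ≤ ((j+4).factorial : ℝ) * ((j+4+1).factorial : ℝ) := by
      have h4 := fact_lb 4 j
      have h5 := fact_lb 5 j
      have he : (j + 4 + 1) = (j + 5) := by omega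
      rw [he]
      have e4 : ((4:ℕ).factorial : ℝ) = 24 := by norm_num [Nat.factorial]
      have e5 : ((5:ℕ).factorial : ℝ) = 120 := by norm_num [Nat.factorial]
      rw [e4] at h4; rw [e5] at h5
      norm_num at h4 h5
      calc (2880:ℝ) * 30^j = (24 * 5^j) * (120 * 6^j) := by
            rw [show (30:ℝ)^j = 5^j * 6^j by rw [← mul_pow]; norm_num]; ring
        _ ≤ ((j+4).factorial : ℝ) * ((j+5).factorial : ℝ) := by
            apply mul_le_mul h4 h5 (by positivity) (by positivity)
    calc t^(2*(j+4)+1) / (((j+4).factorial : ℝ) * ((j+4+1).factorial : ℝ))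
        ≤ (t^9 * (9/4)^j) / ((2880:ℝ) * 30^j) :=
          div_le_div₀ (by positivity) hnum (by positivity) hden
      _ = (t^9/2880) * (3/40)^j := by
          have hpow : ((9:ℝ)/4)^j = (3/40)^j * 30^j := by
            rw [← mul_pow]; norm_num
          rw [hpow]
          have h30 : ((30:ℝ)^j) ≠ 0 := by positivity
          field_simp
  have hbd := tail_bound (summable_f1 x) 4 (by norm_num) (by norm_num) htail
  have hS : ∑ k ∈ Finset.range 4, f1 k x = t - t^3/2 + t^5/12 - t^7/144 := by
    rw [Finset.sum_range_succ, Finset.sum_range_succ, Finset.sum_range_succ,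
      Finset.sum_range_one]
    norm_num [f1, Nat.factorial]
    ring
  rw [← J1_eq, hS] at hbd
  have h1 : (t^9/2880) / (1 - 3/40) ≤ t^9/2664 := by
    rw [div_le_div_iff₀ (by norm_num) (by norm_num)]
    nlinarith [pow_nonneg ht0 9]
  have h2 := abs_le.1 hbd
  linarith [h2.1]

lemma J1_pos_of_le3 {x : ℝ} (hx0 : 0 < x) (hx : x ≤ 3) : 0 < J1 x := by
  have h := J1_lb hx0.le hx
  set t := x/2 with ht
  have ht0 : 0 < t := by positivity
  have ht32 : t ≤ 3/2 := by rw [ht]; linarith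
  have key : 0 < t - t^3/2 + t^5/12 - t^7/144 - t^9/2664 := by
    have hu0 : (0:ℝ) ≤ t^2 := sq_nonneg t
    have hu : t^2 ≤ 9/4 := by nlinarith
    have factored : t - t^3/2 + t^5/12 - t^7/144 - t^9/2664 =
        t * (1 - t^2/2 + (t^2)^2/12 - (t^2)^3/144 - (t^2)^4/2664) := by ring
    rw [factored]
    apply mul_pos ht0
    set u := t^2 with hu'
    nlinarith [mul_nonneg hu0 (sub_nonneg.2 hu), mul_nonneg (mul_nonneg hu0 hu0) (sub_nonneg.2 hu),
      mul_nonneg (mul_nonneg (mul_nonneg hu0 hu0) hu0) (sub_nonneg.2 hu), sq_nonneg u]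
  linarith

lemma J1_ub_small {x : ℝ} (hx0 : 0 ≤ x) (hx : x ≤ 1) : |J1 x| ≤ x := by
  have htail : ∀ j : ℕ, |f1 (j + 0) x| ≤ (x/2) * (1/4)^j := by
    intro j
    rw [abs_f1]
    have habs : |x/2| = x/2 := abs_of_nonneg (by positivity)
    rw [habs]
    have hfac : (1:ℝ) * 2^j ≤ ((j+1).factorial : ℝ) := by
      have h := fact_lb 1 j
      have e : ((1:ℕ).factorial : ℝ) * (((1:ℕ):ℝ)+1)^j = 1 * 2^j := by
        norm_num [Nat.factorial]
      rw [e] at h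
      exact h
    have hfac2 : (1:ℝ) ≤ ((j+0).factorial : ℝ) := fact_ge_one _
    have hnum : (x/2)^(2*(j+0)+1) ≤ (x/2) * (1/2)^j := by
      have he : 2*(j+0)+1 = 1 + 2*j := by omega
      rw [he, pow_add, pow_mul, pow_one]
      apply mul_le_mul_of_nonneg_left ?_ (by positivity)
      apply pow_le_pow_left₀ (by positivity) (by nlinarith) j
    have hden : (1:ℝ) * 2^j ≤ ((j+0).factorial : ℝ) * ((j+0+1).factorial : ℝ) := by
      calc (1:ℝ) * 2^j ≤ 1 * ((j+1).factorial : ℝ) := by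
            apply mul_le_mul_of_nonneg_left ?_ (by norm_num)
            linarith [hfac]
        _ ≤ ((j+0).factorial : ℝ) * ((j+0+1).factorial : ℝ) := by
            apply mul_le_mul hfac2 (by norm_num) (by positivity) (fact_pos _).le
    calc (x/2)^(2*(j+0)+1) / (((j+0).factorial : ℝ) * ((j+0+1).factorial : ℝ))
        ≤ ((x/2) * (1/2)^j) / ((1:ℝ) * 2^j) :=
          div_le_div₀ (by positivity) hnum (by positivity) hden
      _ = (x/2) * (1/4)^j := by
          rw [one_mul, mul_div_assoc]
          congr 1
          rw [div_eq_iff (by positivity), ← mul_pow]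
          norm_num
  have hbd := tail_bound (summable_f1 x) 0 (by norm_num) (by norm_num) htail
  rw [← J1_eq] at hbd
  simp at hbd
  have : (x/2) / (1 - 1/4) = 2*x/3 := by ring
  calc |J1 x| ≤ x/2 / (1 - 1/4) := by
        convert hbd using 2
        norm_num
    _ ≤ x := by rw [this]; linarith

lemma J0_ge_small {x : ℝ} (hx : |x| ≤ 1) : 2/3 ≤ J0 x := by
  have hx2 : x^2 ≤ 1 := by nlinarith [abs_nonneg x, sq_abs x]
  have htail : ∀ j : ℕ, |f0 (j + 1) x| ≤ (1/4) * (1/16)^j := by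
    intro j
    rw [abs_f0]
    have hnum : (x/2)^(2*(j+1)) ≤ (1/4) * (1/4)^j := by
      have he : 2*(j+1) = 2 + 2*j := by omega
      rw [he, pow_add, pow_mul]
      have h1 : (x/2)^2 ≤ 1/4 := by nlinarith
      have h0 : (0:ℝ) ≤ (x/2)^2 := sq_nonneg _
      apply mul_le_mul h1 (pow_le_pow_left₀ h0 h1 j) (by positivity) (by norm_num)
    have hden : (1:ℝ) * 4^j ≤ ((j+1).factorial : ℝ)^2 := by
      have h := fact_lb 1 j
      have e : ((1:ℕ).factorial : ℝ) * (((1:ℕ):ℝ)+1)^j = 2^j := by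
        norm_num [Nat.factorial]
      rw [e] at h
      have h2 : ((2:ℝ))^j * 2^j = 4^j := by rw [← mul_pow]; norm_num
      nlinarith [pow_pos (show (0:ℝ) < 2 by norm_num) j]
    calc (x/2)^(2*(j+1)) / ((j+1).factorial : ℝ)^2
        ≤ ((1/4) * (1/4)^j) / ((1:ℝ) * 4^j) :=
          div_le_div₀ (by positivity) hnum (by positivity) hden
      _ = (1/4) * (1/16)^j := by
          rw [one_mul, mul_div_assoc]
          congr 1
          rw [div_eq_iff (by positivity), ← mul_pow]
          norm_num
  have hbd := tail_bound (summable_f0 x) 1 (by norm_num) (by norm_num) htail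
  rw [← J0_eq] at hbd
  have hS : ∑ k ∈ Finset.range 1, f0 k x = 1 := by
    rw [Finset.sum_range_one]
    norm_num [f0]
  rw [hS] at hbd
  have h2 := abs_le.1 hbd
  have : (1/4 : ℝ) / (1 - 1/16) = 4/15 := by norm_num
  rw [this] at h2
  linarith [h2.1]

lemma fact5_lb (j : ℕ) : (120:ℝ) * 6^j ≤ ((j+5).factorial : ℝ) := by
  have h := fact_lb 5 j
  have e : ((5:ℕ).factorial : ℝ) * (((5:ℕ):ℝ)+1)^j = 120 * 6^j := by
    norm_num [Nat.factorial]
  rw [e] at h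
  exact h

lemma J0_ub_34 {x : ℝ} (hx3 : 3 ≤ x) (hx4 : x ≤ 4) :
    J0 x ≤ 1 - (x/2)^2 + (x/2)^4/4 - (x/2)^6/36 + (x/2)^8/576 + (x/2)^10/12800 := by
  set t := x/2 with ht
  have ht0 : (0:ℝ) ≤ t := by rw [ht]; linarith
  have ht2 : t ≤ 2 := by rw [ht]; linarith
  have htail : ∀ j : ℕ, |f0 (j + 5) x| ≤ (t^10/14400) * (1/9)^j := by
    intro j
    rw [abs_f0]
    have hnum : (x/2)^(2*(j+5)) ≤ t^10 * 4^j := by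
      have he : 2*(j+5) = 10 + 2*j := by omega
      rw [← ht, he, pow_add, pow_mul]
      apply mul_le_mul_of_nonneg_left ?_ (by positivity)
      apply pow_le_pow_left₀ (sq_nonneg t) (by nlinarith) j
    have hden : (14400:ℝ) * 36^j ≤ ((j+5).factorial : ℝ)^2 := by
      have h := fact5_lb j
      have h0 : (0:ℝ) ≤ 120 * 6^j := by positivity
      calc (14400:ℝ) * 36^j = (120 * 6^j) * (120 * 6^j) := by
            rw [show (36:ℝ)^j = 6^j * 6^j by rw [← mul_pow]; norm_num]; ring
        _ ≤ ((j+5).factorial : ℝ)^2 := by nlinarith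
    calc (x/2)^(2*(j+5)) / ((j+5).factorial : ℝ)^2
        ≤ (t^10 * 4^j) / ((14400:ℝ) * 36^j) :=
          div_le_div₀ (by positivity) hnum (by positivity) hden
      _ = (t^10/14400) * (1/9)^j := by
          have hpow : ((4:ℝ))^j = (1/9)^j * 36^j := by rw [← mul_pow]; norm_num
          rw [hpow]
          have h36 : ((36:ℝ)^j) ≠ 0 := by positivity
          field_simp
  have hbd := tail_bound (summable_f0 x) 5 (by norm_num) (by norm_num) htail
  rw [← J0_eq] at hbd
  have hS : ∑ k ∈ Finset.range 5, f0 k x = 1 - t^2 + t^4/4 - t^6/36 + t^8/576 := by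
    rw [Finset.sum_range_succ, Finset.sum_range_succ, Finset.sum_range_succ,
      Finset.sum_range_succ, Finset.sum_range_one]
    norm_num [f0, Nat.factorial, ← ht]
    ring
  rw [hS] at hbd
  have h2 := abs_le.1 hbd
  have h3 : (t^10/14400) / (1 - 1/9) ≤ t^10/12800 := by
    rw [div_le_div_iff₀ (by norm_num) (by norm_num)]
    nlinarith [pow_nonneg ht0 10]
  linarith [h2.2]

lemma J0_neg_34 {x : ℝ} (hx3 : 3 ≤ x) (hx4 : x ≤ 4) : J0 x < 0 := by
  have h := J0_ub_34 hx3 hx4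
  set t := x/2 with ht
  have ht1 : (3/2 : ℝ) ≤ t := by rw [ht]; linarith
  have ht2 : t ≤ 2 := by rw [ht]; linarith
  have key : 1 - t^2 + t^4/4 - t^6/36 + t^8/576 + t^10/12800 < 0 := by
    set u := t^2 with hu'
    have hu1 : (9/4:ℝ) ≤ u := by rw [hu']; nlinarith
    have hu2 : u ≤ 4 := by rw [hu']; nlinarith
    have factored : 1 - t^2 + t^4/4 - t^6/36 + t^8/576 + t^10/12800 =
        1 - u + u^2/4 - u^3/36 + u^4/576 + u^5/12800 := by
      rw [hu']; ring
    rw [factored]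
    nlinarith [mul_nonneg (sub_nonneg.2 hu1) (sub_nonneg.2 hu2),
      mul_nonneg (mul_nonneg (sub_nonneg.2 hu1) (sub_nonneg.2 hu2)) (sub_nonneg.2 hu1),
      mul_nonneg (mul_nonneg (sub_nonneg.2 hu1) (sub_nonneg.2 hu2)) (sub_nonneg.2 hu2),
      sq_nonneg (u - 3), mul_nonneg (mul_nonneg (sub_nonneg.2 hu1) (sub_nonneg.2 hu1)) (sub_nonneg.2 hu2),
      mul_nonneg (mul_nonneg (mul_nonneg (sub_nonneg.2 hu1) (sub_nonneg.2 hu2)) (sub_nonneg.2 hu2)) (sub_nonneg.2 hu2)]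
  linarith

lemma J1_4_neg : J1 4 < 0 := by
  have htail : ∀ j : ℕ, |f1 (j + 5) 4| ≤ (16/675) * (2/21)^j := by
    intro j
    rw [abs_f1]
    have habs : |(4:ℝ)/2| = 2 := by norm_num
    rw [habs]
    have hnum : (2:ℝ)^(2*(j+5)+1) = 2048 * 4^j := by
      have he : 2*(j+5)+1 = 11 + 2*j := by omega
      rw [he, pow_add, pow_mul]
      norm_num
    have hden : (86400:ℝ) * 42^j ≤ ((j+5).factorial : ℝ) * ((j+5+1).factorial : ℝ) := by
      have h5 := fact5_lb j
      have h6 : (720:ℝ) * 7^j ≤ ((j+6).factorial : ℝ) := by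
        have h := fact_lb 6 j
        have e : ((6:ℕ).factorial : ℝ) * (((6:ℕ):ℝ)+1)^j = 720 * 7^j := by
          norm_num [Nat.factorial]
        rw [e] at h
        exact h
      have he : (j + 5 + 1) = (j + 6) := by omega
      rw [he]
      calc (86400:ℝ) * 42^j = (120 * 6^j) * (720 * 7^j) := by
            rw [show (42:ℝ)^j = 6^j * 7^j by rw [← mul_pow]; norm_num]; ring
        _ ≤ ((j+5).factorial : ℝ) * ((j+6).factorial : ℝ) := by
            apply mul_le_mul h5 h6 (by positivity) (by positivity)
    calc (2:ℝ)^(2*(j+5)+1) / (((j+5).factorial : ℝ) * ((j+5+1).factorial : ℝ))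
        ≤ (2048 * 4^j) / ((86400:ℝ) * 42^j) := by
          rw [hnum]
          apply div_le_div₀ (by positivity) le_rfl (by positivity) hden
      _ = (16/675) * (2/21)^j := by
          have hpow : ((4:ℝ))^j = (2/21)^j * 42^j := by rw [← mul_pow]; norm_num
          rw [hpow]
          have h42 : ((42:ℝ)^j) ≠ 0 := by positivity
          field_simp
          ring
  have hbd := tail_bound (summable_f1 4) 5 (by norm_num) (by norm_num) htail
  rw [← J1_eq] at hbd
  have hS : ∑ k ∈ Finset.range 5, f1 k 4 = -2/45 := by
    rw [Finset.sum_range_succ, Finset.sum_range_succ, Finset.sum_range_succ,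
      Finset.sum_range_succ, Finset.sum_range_one]
    norm_num [f1, Nat.factorial]
  rw [hS] at hbd
  have h2 := abs_le.1 hbd
  have : (16/675 : ℝ) / (1 - 2/21) = 336/12825 := by norm_num
  rw [this] at h2
  linarith [h2.2]

lemma mem_Ioo66 {y : ℝ} (h0 : 0 ≤ y) (h5 : y ≤ 5) : y ∈ Set.Ioo (-6:ℝ) 6 :=
  ⟨by linarith, by linarith⟩

lemma contOn_J0 : ContinuousOn J0 (Set.Icc (0:ℝ) 5) := fun y hy =>
  ((hasDerivAt_J0 (mem_Ioo66 hy.1 hy.2)).continuousAt).continuousWithinAt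

lemma contOn_FJ : ContinuousOn FJ (Set.Icc (0:ℝ) 5) := fun y hy =>
  ((hasDerivAt_FJ (mem_Ioo66 hy.1 hy.2)).continuousAt).continuousWithinAt

/-- the set of zeros of FJ in [3,4] -/
def Tset : Set ℝ := Set.Icc (3:ℝ) 4 ∩ FJ ⁻¹' {0}

lemma Tset_closed : IsClosed Tset :=
  (contOn_FJ.mono (by intro y hy; exact ⟨by linarith [hy.1], by linarith [hy.2]⟩)).preimage_isClosed_of_isClosed
    isClosed_Icc isClosed_singleton

lemma Tset_nonempty : Tset.Nonempty := by
  have h3 : 0 < FJ 3 := by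
    rw [FJ]
    have := J1_pos_of_le3 (show (0:ℝ) < 3 by norm_num) le_rfl
    nlinarith
  have h4 : FJ 4 < 0 := by
    rw [FJ]
    nlinarith [J1_4_neg]
  have hc : ContinuousOn FJ (Set.Icc (3:ℝ) 4) :=
    contOn_FJ.mono (by intro y hy; exact ⟨by linarith [hy.1], by linarith [hy.2]⟩)
  have := intermediate_value_Icc' (show (3:ℝ) ≤ 4 by norm_num) hc
    (show (0:ℝ) ∈ Set.Icc (FJ 4) (FJ 3) by exact ⟨h4.le, h3.le⟩)
  obtain ⟨c, hc1, hc2⟩ := this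
  exact ⟨c, hc1, hc2⟩

/-- first positive zero of J1 -/
def j11 : ℝ := sInf Tset

lemma j11_mem : j11 ∈ Tset :=
  Tset_closed.csInf_mem Tset_nonempty (⟨3, fun y hy => hy.1.1⟩)

lemma j11_ge3 : 3 ≤ j11 := j11_mem.1.1
lemma j11_le4 : j11 ≤ 4 := j11_mem.1.2
lemma J1_j11 : J1 j11 = 0 := by
  have h := j11_mem.2
  simp only [Set.mem_preimage, Set.mem_singleton_iff, FJ] at h
  have h3 : (0:ℝ) < j11 := lt_of_lt_of_le (by norm_num) j11_ge3
  exact (mul_eq_zero.1 h).resolve_left h3.ne'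

lemma j11_isLeast : IsLeast {x : ℝ | 0 < x ∧ J1 x = 0} j11 := by
  constructor
  · exact ⟨lt_of_lt_of_le (by norm_num) j11_ge3, J1_j11⟩
  · rintro y ⟨hy0, hy1⟩
    by_contra hlt
    push_neg at hlt
    have hy3 : 3 < y := by
      by_contra h3
      push_neg at h3
      exact absurd hy1 (J1_pos_of_le3 hy0 h3).ne'
    have hy4 : y ≤ 4 := by linarith [j11_le4]
    have : y ∈ Tset := ⟨⟨hy3.le, hy4⟩, by simp [FJ, hy1]⟩
    exact absurd (csInf_le ⟨3, fun z hz => hz.1.1⟩ this) (not_le.2 hlt)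

lemma j11_gt3 : 3 < j11 := by
  rcases lt_or_eq_of_le j11_ge3 with h | h
  · exact h
  · exfalso
    have := J1_pos_of_le3 (show (0:ℝ) < 3 by norm_num) le_rfl
    rw [h] at this
    exact this.ne' J1_j11

lemma FJ_pos_of_lt_j11 {x : ℝ} (hx0 : 0 < x) (hx : x < j11) : 0 < FJ x := by
  rcases le_or_gt x 3 with h3 | h3
  · rw [FJ]
    exact mul_pos hx0 (J1_pos_of_le3 hx0 h3)
  · by_contra hneg
    push_neg at hneg
    -- FJ x ≤ 0, and FJ 3 > 0; find zero in [3, x]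
    have hFJ3 : 0 < FJ 3 := by
      rw [FJ]
      have := J1_pos_of_le3 (show (0:ℝ) < 3 by norm_num) le_rfl
      nlinarith
    have hc : ContinuousOn FJ (Set.Icc (3:ℝ) x) := by
      apply contOn_FJ.mono
      intro y hy
      exact ⟨by linarith [hy.1], by linarith [hy.2, hx, j11_le4]⟩
    have := intermediate_value_Icc' h3.le hc
      (show (0:ℝ) ∈ Set.Icc (FJ x) (FJ 3) by exact ⟨hneg, hFJ3.le⟩)
    obtain ⟨z, hz1, hz2⟩ := this
    have hz0 : 0 < z := by linarith [hz1.1]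
    have hJ1z : J1 z = 0 := by
      rw [FJ] at hz2
      exact (mul_eq_zero.1 hz2).resolve_left hz0.ne'
    have := j11_isLeast.2 ⟨hz0, hJ1z⟩
    linarith [hz1.2]

lemma J1_pos_of_lt_j11 {x : ℝ} (hx0 : 0 < x) (hx : x < j11) : 0 < J1 x := by
  have := FJ_pos_of_lt_j11 hx0 hx
  rw [FJ] at this
  nlinarith [this]


lemma J0_j11_neg : J0 j11 < 0 := J0_neg_34 j11_ge3 j11_le4

/-- the ratio function -/
def gR (x : ℝ) : ℝ := J0 x / FJ x

lemma mem66 {x : ℝ} (hx : x ∈ Set.Ioo 0 j11) : x ∈ Set.Ioo (-6:ℝ) 6 :=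
  mem_Ioo66 hx.1.le (by linarith [hx.2, j11_le4])

lemma FJ_ne {x : ℝ} (hx : x ∈ Set.Ioo 0 j11) : FJ x ≠ 0 :=
  (FJ_pos_of_lt_j11 hx.1 hx.2).ne'

lemma hasDerivAt_gR {x : ℝ} (hx : x ∈ Set.Ioo 0 j11) :
    HasDerivAt gR ((-(J1 x) * FJ x - J0 x * (x * J0 x)) / (FJ x)^2) x :=
  (hasDerivAt_J0 (mem66 hx)).div (hasDerivAt_FJ (mem66 hx)) (FJ_ne hx)

lemma deriv_gR_neg {x : ℝ} (hx : x ∈ Set.Ioo 0 j11) : deriv gR x < 0 := by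
  rw [(hasDerivAt_gR hx).deriv]
  apply div_neg_of_neg_of_pos
  · have h1 : 0 < J1 x := J1_pos_of_lt_j11 hx.1 hx.2
    have : -(J1 x) * FJ x - J0 x * (x * J0 x) = -(x * ((J1 x)^2 + (J0 x)^2)) := by
      rw [FJ]; ring
    rw [this]
    have : 0 < x * ((J1 x)^2 + (J0 x)^2) := by
      apply mul_pos hx.1
      nlinarith [sq_nonneg (J0 x)]
    linarith
  · exact pow_pos ((FJ_pos_of_lt_j11 hx.1 hx.2)) 2

lemma contOn_gR : ContinuousOn gR (Set.Ioo 0 j11) := fun x hx =>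
  (hasDerivAt_gR hx).continuousAt.continuousWithinAt

lemma strictAntiOn_gR : StrictAntiOn gR (Set.Ioo 0 j11) := by
  apply strictAntiOn_of_deriv_neg (convex_Ioo 0 j11) contOn_gR
  intro x hx
  rw [interior_Ioo] at hx
  exact deriv_gR_neg hx

lemma main_for_a {a : ℝ} (ha : a ∈ Set.Ioo (0:ℝ) 1) :
    (∃! x : ℝ, x ∈ Set.Ioo 0 j11 ∧ Psi a x = 0) ∧
    ∀ x : ℝ, 0 < x → Psi a x = 0 →
      ¬ IsLeast {y : ℝ | 0 < y ∧ Psi a y = 0} x → j11 < x := by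
  set c : ℝ := -(2 * Real.log a) with hc_def
  have hc : 0 < c := by
    have := Real.log_neg ha.1 ha.2
    rw [hc_def]; linarith
  have hPsi : ∀ x, Psi a x = J0 x - c * FJ x := by
    intro x
    rw [Psi, FJ, hc_def]; ring
  have hPsi_iff : ∀ x ∈ Set.Ioo 0 j11, (Psi a x = 0 ↔ gR x = c) := by
    intro x hx
    rw [hPsi, gR, div_eq_iff (FJ_ne hx)]
    constructor <;> intro h <;> nlinarith [h]
  -- choose endpoints
  set x₁ : ℝ := min (1/2) (1/(2*(c+1))) with hx₁_def
  have hx₁0 : 0 < x₁ := by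
    apply lt_min (by norm_num)
    positivity
  have hx₁h : x₁ ≤ 1/2 := min_le_left _ _
  have hx₁c : x₁ ≤ 1/(2*(c+1)) := min_le_right _ _
  have hx₁m : x₁ ∈ Set.Ioo 0 j11 := ⟨hx₁0, by linarith [j11_gt3]⟩
  set x₂ : ℝ := (3 + j11)/2 with hx₂_def
  have hx₂3 : 3 < x₂ := by rw [hx₂_def]; linarith [j11_gt3]
  have hx₂m : x₂ ∈ Set.Ioo 0 j11 := ⟨by linarith, by rw [hx₂_def]; linarith [j11_gt3]⟩
  have hx₂4 : x₂ ≤ 4 := by rw [hx₂_def]; linarith [j11_le4]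
  have hx₁₂ : x₁ ≤ x₂ := by linarith
  -- g x₁ > c
  have hgx₁ : c < gR x₁ := by
    have hJ0 : 2/3 ≤ J0 x₁ := J0_ge_small (by rw [abs_of_pos hx₁0]; linarith)
    have hJ1 : |J1 x₁| ≤ x₁ := J1_ub_small hx₁0.le (by linarith)
    have hFJ : 0 < FJ x₁ := FJ_pos_of_lt_j11 hx₁0 hx₁m.2
    have hFJle : FJ x₁ ≤ x₁^2 := by
      rw [FJ]
      have := (abs_le.1 hJ1).2
      nlinarith
    rw [gR, lt_div_iff₀ hFJ]
    have hx₁sq : x₁^2 ≤ (1/(2*(c+1)))^2 := by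
      apply pow_le_pow_left₀ hx₁0.le hx₁c
    have key : c * x₁^2 < 2/3 := by
      have h1 : c * x₁^2 ≤ c * (1/(2*(c+1)))^2 := by
        apply mul_le_mul_of_nonneg_left hx₁sq hc.le
      have h2 : c * (1/(2*(c+1)))^2 < 2/3 := by
        have hpos : (0:ℝ) < (2*(c+1))^2 := by positivity
        rw [div_pow, one_pow, mul_one_div, div_lt_iff₀ hpos]
        nlinarith
      linarith
    nlinarith [mul_le_mul_of_nonneg_left hFJle hc.le]
  -- g x₂ < c
  have hgx₂ : gR x₂ < c := by
    have hJ0 : J0 x₂ < 0 := J0_neg_34 hx₂3.le hx₂4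
    have hFJ : 0 < FJ x₂ := FJ_pos_of_lt_j11 hx₂m.1 hx₂m.2
    have : gR x₂ < 0 := div_neg_of_neg_of_pos hJ0 hFJ
    linarith
  -- IVT
  have hcont : ContinuousOn gR (Set.Icc x₁ x₂) := by
    apply contOn_gR.mono
    intro y hy
    exact ⟨lt_of_lt_of_le hx₁0 hy.1, lt_of_le_of_lt hy.2 hx₂m.2⟩
  obtain ⟨x₀, hx₀I, hx₀⟩ := intermediate_value_Icc' hx₁₂ hcont
    (show c ∈ Set.Icc (gR x₂) (gR x₁) from ⟨hgx₂.le, hgx₁.le⟩)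
  have hx₀m : x₀ ∈ Set.Ioo 0 j11 := ⟨lt_of_lt_of_le hx₁0 hx₀I.1, lt_of_le_of_lt hx₀I.2 hx₂m.2⟩
  have hx₀Psi : Psi a x₀ = 0 := (hPsi_iff x₀ hx₀m).2 hx₀
  -- uniqueness
  have huniq : ∀ y ∈ Set.Ioo 0 j11, Psi a y = 0 → y = x₀ := by
    intro y hy hPsiy
    exact strictAntiOn_gR.injOn hy hx₀m (((hPsi_iff y hy).1 hPsiy).trans hx₀.symm)
  constructor
  · exact ⟨x₀, ⟨hx₀m, hx₀Psi⟩, fun y hy => huniq y hy.1 hy.2⟩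
  · intro x hx0 hxPsi hnotleast
    by_contra hle
    push_neg at hle
    rcases lt_or_eq_of_le hle with hlt | heq
    · -- x < j11 : then x = x₀ and x₀ is least, contradiction
      have hxm : x ∈ Set.Ioo 0 j11 := ⟨hx0, hlt⟩
      have hxx₀ : x = x₀ := huniq x hxm hxPsi
      apply hnotleast
      constructor
      · exact ⟨hx0, hxPsi⟩
      · rintro y ⟨hy0, hyPsi⟩
        by_contra hyx
        push_neg at hyx
        have hym : y ∈ Set.Ioo 0 j11 := ⟨hy0, by linarith⟩
        have : y = x₀ := huniq y hym hyPsi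
        rw [hxx₀] at hyx
        rw [this] at hyx
        exact lt_irrefl _ hyx
    · -- x = j11 : Psi a j11 = J0 j11 < 0 ≠ 0
      have hFJ11 : FJ j11 = 0 := by rw [FJ, J1_j11]; ring
      have : Psi a x = J0 j11 := by rw [heq, hPsi, hFJ11]; ring
      rw [hxPsi] at this
      exact absurd this.symm J0_j11_neg.ne

/-- For every `a ∈ (0,1)`, `Ψ_a` has exactly one zero in `(0, j₁,₁)`, where `j₁,₁` is the
smallest positive zero of `J₁`; consequently, every positive zero of `Ψ_a` other than its
smallest one is greater than `j₁,₁`. -/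
theorem unique_zero_Psi_below_first_J1_zero :
    ∃ j11 : ℝ, IsLeast {x : ℝ | 0 < x ∧ J1 x = 0} j11 ∧
      ∀ a ∈ Set.Ioo (0 : ℝ) 1,
        (∃! x : ℝ, x ∈ Set.Ioo 0 j11 ∧ Psi a x = 0) ∧
        ∀ x : ℝ, 0 < x → Psi a x = 0 →
          ¬ IsLeast {y : ℝ | 0 < y ∧ Psi a y = 0} x → j11 < x := by
  exact ⟨j11, j11_isLeast, fun a ha => main_for_a ha⟩

end
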